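/- Let k be an infinite field and let X ⊆ 𝔸²_k be a smooth affine plane curve over k (the vanishing locus of a nonzero polynomial F ∈ k[t, Y], nonconstant in Y, which is smooth over k). Then there exist λ, μ ∈ k such that the line Y = λt + μ meets X transversally in at least one point; in particular there is a closed point x ∈ X lying on this line whose residue field κ(x) is a separable extension of k. -/

import Mathlib

open MvPolynomial

-- Lemma B: structural induction on factorization
lemma lemB {R : Type*} [CommRing R] [IsDomain R] [UniqueFactorizationMonoid R]
    (H : Polynomial R) (hH : H ≠ 0)
    (h : ∀ q : Polynomial R, Irreducible q → q ∣ H → 1 ≤ q.natDegree →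
      (q ∣ Polynomial.derivative H ∧ ¬ q * q ∣ H)) :
    Polynomial.derivative H = 0 := by
  classical
  induction H using UniqueFactorizationMonoid.induction_on_prime with
  | h₁ => exact absurd rfl hH
  | h₂ u hu =>
      obtain ⟨r, -, rfl⟩ := Polynomial.isUnit_iff.mp hu
      exact Polynomial.derivative_C
  | h₃ a p ha hp ih =>
      have hpa : p * a ≠ 0 := hH
      have ha0 : a ≠ 0 := ha
      have hp0 : p ≠ 0 := hp.ne_zero
      by_cases hdeg : p.natDegree = 0
      · -- p is a nonzero constant
        obtain ⟨c, rfl⟩ := Polynomial.natDegree_eq_zero.mp hdeg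
        have hc0 : c ≠ 0 := fun h' => by simp [h'] at hp0
        have hder : Polynomial.derivative (Polynomial.C c * a)
            = Polynomial.C c * Polynomial.derivative a := by
          rw [Polynomial.derivative_mul, Polynomial.derivative_C, zero_mul, zero_add]
        rw [hder]
        have ha' : Polynomial.derivative a = 0 := by
          apply ih ha0
          intro q hq hqa hqdeg
          have hqH : q ∣ Polynomial.C c * a := hqa.mul_left _
          obtain ⟨h1, h2⟩ := h q hq hqH hqdeg
          constructor
          · rw [hder] at h1
            rcases (hq.prime.dvd_mul.mp h1) with h' | h'
            · exfalso
              have := Polynomial.eq_zero_of_dvd_of_natDegree_lt h'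
                (by rw [Polynomial.natDegree_C]; exact hqdeg)
              exact hc0 (by simpa using this)
            · exact h'
          · exact fun hsq => h2 (hsq.mul_left _)
        rw [ha', mul_zero]
      · -- p has positive degree
        have hpdeg : 1 ≤ p.natDegree := Nat.one_le_iff_ne_zero.mpr hdeg
        obtain ⟨h1, h2⟩ := h p hp.irreducible (dvd_mul_right _ _) hpdeg
        have hderp : Polynomial.derivative p = 0 := by
          rw [Polynomial.derivative_mul] at h1
          have hpd : p ∣ Polynomial.derivative p * a := by
            have : p ∣ p * Polynomial.derivative a := dvd_mul_right _ _
            exact (dvd_add_right this).mp (by rwa [add_comm] at h1)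
          rcases hp.dvd_mul.mp hpd with h' | h'
          · exact Polynomial.eq_zero_of_dvd_of_natDegree_lt h'
              (Polynomial.natDegree_derivative_lt hdeg)
          · exact absurd (mul_dvd_mul_left p h') h2
        rw [Polynomial.derivative_mul, hderp, zero_mul, zero_add]
        have ha' : Polynomial.derivative a = 0 := by
          apply ih ha0
          intro q hq hqa hqdeg
          have hqH : q ∣ p * a := hqa.mul_left _
          obtain ⟨g1, g2⟩ := h q hq hqH hqdeg
          constructor
          · rw [Polynomial.derivative_mul, hderp, zero_mul, zero_add] at g1
            rcases hq.prime.dvd_mul.mp g1 with h' | h'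
            · exfalso
              have hpq : p ∣ a :=
                ((hq.associated_of_dvd hp.irreducible h').symm.dvd).trans hqa
              exact h2 (mul_dvd_mul_left p hpq)
            · exact h'
          · exact fun hsq => g2 (hsq.mul_left _)
        rw [ha', mul_zero]

lemma sep_of_simple_root {k K : Type*} [Field k] [Field K] [Algebra k K]
    (g : Polynomial k) (x : K) (h0 : Polynomial.aeval x g = 0)
    (h1 : Polynomial.aeval x (Polynomial.derivative g) ≠ 0) : IsSeparable k x := by
  have hg : g ≠ 0 := by rintro rfl; simp at h1
  have hint : IsIntegral k x := IsAlgebraic.isIntegral ⟨g, hg, h0⟩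
  obtain ⟨h, hh⟩ := minpoly.dvd k x h0
  have hd : Polynomial.aeval x (Polynomial.derivative (minpoly k x)) ≠ 0 := by
    intro hz
    apply h1
    rw [hh, Polynomial.derivative_mul, map_add, map_mul, map_mul, hz, zero_mul,
      minpoly.aeval, zero_mul, add_zero]
  have hdne : Polynomial.derivative (minpoly k x) ≠ 0 := fun hz => hd (by rw [hz, map_zero])
  exact (Polynomial.separable_iff_derivative_ne_zero (minpoly.irreducible hint)).mpr hdne

lemma exists_eval_ne_zero {k : Type*} [CommRing k] [IsDomain k] [Infinite k] {n : ℕ}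
    (c : MvPolynomial (Fin n) k) (hc : c ≠ 0) : ∃ v : Fin n → k, eval v c ≠ 0 := by
  by_contra hcon
  push_neg at hcon
  exact hc (MvPolynomial.funext (fun v => by rw [hcon v, map_zero]))

-- nonvanishing point over an extension field
lemma exists_aeval_ne_zero {k K : Type*} [Field k] [Field K] [Algebra k K] [Infinite K] {n : ℕ}
    (c : MvPolynomial (Fin n) k) (hc : c ≠ 0) : ∃ v : Fin n → K, aeval v c ≠ 0 := by
  have hmap : MvPolynomial.map (algebraMap k K) c ≠ 0 := by
    intro hz
    exact hc (MvPolynomial.map_injective _ (algebraMap k K).injective (by rwa [map_zero]))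
  obtain ⟨v, hv⟩ := exists_eval_ne_zero _ hmap
  exact ⟨v, by rwa [MvPolynomial.aeval_def, ← MvPolynomial.eval_map]⟩

-- chain rule for substitution in two variables
lemma pderiv_aeval_two {k : Type*} [CommRing k] (g : Fin 2 → MvPolynomial (Fin 2) k)
    (i : Fin 2) (p : MvPolynomial (Fin 2) k) :
    pderiv i (aeval g p) =
      aeval g (pderiv 0 p) * pderiv i (g 0) + aeval g (pderiv 1 p) * pderiv i (g 1) := by
  induction p using MvPolynomial.induction_on with
  | C a => simp
  | add p q hp hq =>
      simp only [map_add, hp, hq]; ring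
  | mul_X p j hp =>
      rw [map_mul, aeval_X, pderiv_mul, hp]
      fin_cases j <;>
        simp [pderiv_mul, pderiv_X, Pi.single_apply, Finsupp.single_apply] <;> ring

lemma derivative_finSuccEquiv {k : Type*} [CommRing k] (p : MvPolynomial (Fin 2) k) :
    Polynomial.derivative (finSuccEquiv k 1 p) = finSuccEquiv k 1 (pderiv 0 p) := by
  induction p using MvPolynomial.induction_on with
  | C a =>
      rw [pderiv_C, map_zero]
      have : finSuccEquiv k 1 (C a) = Polynomial.C (C a) := by
        simp [finSuccEquiv_apply]
      rw [this, Polynomial.derivative_C]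
  | add p q hp hq => simp only [map_add, Polynomial.derivative_add, hp, hq]
  | mul_X p j hp =>
      rw [map_mul, Polynomial.derivative_mul, hp, pderiv_mul, map_add, map_mul, map_mul]
      have key : Polynomial.derivative ((finSuccEquiv k 1) (X j))
          = (finSuccEquiv k 1) ((pderiv (0 : Fin 2)) (X j)) := by
        refine Fin.cases ?_ (fun j' => ?_) j
        · rw [finSuccEquiv_X_zero, Polynomial.derivative_X, pderiv_X_self, map_one]
        · rw [finSuccEquiv_X_succ, Polynomial.derivative_C,
            pderiv_X_of_ne (Fin.succ_ne_zero j'), map_zero]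
      rw [key]

lemma eval_finSuccEquiv_compat {k K : Type*} [CommRing k] [CommRing K] [Algebra k K]
    (x m : K) (p : MvPolynomial (Fin 2) k) :
    aeval ![x, m] p
      = Polynomial.eval₂ ((aeval ![m] : MvPolynomial (Fin 1) k →ₐ[k] K) : MvPolynomial (Fin 1) k →+* K)
          x (finSuccEquiv k 1 p) := by
  have h := MvPolynomial.ringHom_ext (σ := Fin 2)
    (f := ((aeval ![x, m] : MvPolynomial (Fin 2) k →ₐ[k] K) : MvPolynomial (Fin 2) k →+* K))
    (g := (Polynomial.eval₂RingHom
        ((aeval ![m] : MvPolynomial (Fin 1) k →ₐ[k] K) : MvPolynomial (Fin 1) k →+* K) x).comp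
        ((finSuccEquiv k 1 : MvPolynomial (Fin 2) k ≃ₐ[k] Polynomial (MvPolynomial (Fin 1) k)) :
          MvPolynomial (Fin 2) k →+* Polynomial (MvPolynomial (Fin 1) k)))
    ?_ ?_
  · exact RingHom.congr_fun h p
  · intro a
    simp [finSuccEquiv_apply, algebraMap_eq]
  · intro i
    refine Fin.cases ?_ (fun j => ?_) i
    · simp [finSuccEquiv_X_zero]
    · have hj : j = 0 := Subsingleton.elim j 0
      subst hj
      rw [RingHom.comp_apply]
      have h2 : (finSuccEquiv k 1) (X (Fin.succ 0)) = Polynomial.C (X 0) := finSuccEquiv_X_succ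
      show aeval ![x, m] (X (Fin.succ 0)) = Polynomial.eval₂RingHom _ x ((finSuccEquiv k 1) (X (Fin.succ 0)))
      rw [h2]
      simp [show (Fin.succ 0 : Fin 2) = 1 from rfl]


-- square divisor divides partial derivatives
lemma dvd_pderiv_of_sq_dvd {k : Type*} [CommRing k] {i : Fin 2}
    {p q : MvPolynomial (Fin 2) k} (h : q * q ∣ p) : q ∣ pderiv i p := by
  obtain ⟨w, rfl⟩ := h
  rw [pderiv_mul, pderiv_mul]
  exact dvd_add (((dvd_add ⟨pderiv i q, mul_comm _ _⟩ (Dvd.intro _ rfl)).mul_right w))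
    ((Dvd.intro _ rfl).mul_right _)

-- root of a polynomial over R after specializing the coefficients
lemma exists_root_eval₂ {K R₀ : Type*} [Field K] [IsAlgClosed K] [CommRing R₀]
    (ψ : R₀ →+* K) (q : Polynomial R₀) (hdeg : 1 ≤ q.natDegree)
    (hlead : ψ q.leadingCoeff ≠ 0) : ∃ x : K, Polynomial.eval₂ ψ x q = 0 := by
  have hdeg' : (q.map ψ).natDegree = q.natDegree :=
    Polynomial.natDegree_map_of_leadingCoeff_ne_zero _ hlead
  have hne : (q.map ψ).degree ≠ 0 := by
    intro h
    have := Polynomial.natDegree_eq_zero_iff_degree_le_zero.mpr (le_of_eq h)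
    omega
  obtain ⟨x, hx⟩ := IsAlgClosed.exists_root _ hne
  exact ⟨x, by rw [← Polynomial.eval_map]; exact hx⟩

set_option maxHeartbeats 1600000 in
theorem stmt_19 {k : Type*} [Field k] [Infinite k]
    (F : MvPolynomial (Fin 2) k) (hF0 : F ≠ 0)
    (hFY : 0 < F.degreeOf 1)
    -- smoothness of the plane curve F = 0 over k (Jacobian criterion over the algebraic closure)
    (hsmooth : ∀ x y : AlgebraicClosure k,
      (aeval ![x, y]) F = 0 →
        ¬((aeval ![x, y]) (pderiv 0 F) = 0 ∧ (aeval ![x, y]) (pderiv 1 F) = 0)) :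
    ∃ lam mu : k, ∃ x y : AlgebraicClosure k,
      y = algebraMap k (AlgebraicClosure k) lam * x + algebraMap k (AlgebraicClosure k) mu ∧
      (aeval ![x, y]) F = 0 ∧
      -- the line Y = lam * t + mu meets the curve transversally at (x, y)
      (aeval ![x, y]) (pderiv 0 F + C lam * pderiv 1 F) ≠ 0 ∧
      -- the corresponding closed point has residue field separable over k
      IsSeparable k x ∧ IsSeparable k y := by
  classical
  set K := AlgebraicClosure k with hK
  haveI : Infinite K := Infinite.of_injective _ (algebraMap k K).injective
  -- Step A: the curve is nonempty, so both partials cannot vanish identically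
  have hboth : ¬ (pderiv 0 F = 0 ∧ pderiv 1 F = 0) := by
    rintro ⟨hp0, hp1⟩
    set Fs := rename (Equiv.swap (0 : Fin 2) 1) F with hFsdef
    have hFs0 : Fs ≠ 0 := fun h =>
      hF0 (MvPolynomial.rename_injective _ (Equiv.swap 0 1).injective (by rwa [map_zero]))
    have hdegFs : 1 ≤ degreeOf 0 Fs := by
      have h := MvPolynomial.degreeOf_rename_of_injective
        (p := F) (f := Equiv.swap (0 : Fin 2) 1) (Equiv.swap 0 1).injective 1
      rw [Equiv.swap_apply_right] at h
      rw [hFsdef, h]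
      exact hFY
    set PB := finSuccEquiv k 1 Fs with hPBdef
    have hPBdeg : 1 ≤ PB.natDegree := by rw [hPBdef, natDegree_finSuccEquiv]; exact hdegFs
    have hPB0 : PB ≠ 0 := fun h => hFs0 (by
      have := congrArg (finSuccEquiv k 1).symm h
      rwa [AlgEquiv.symm_apply_apply, map_zero] at this)
    obtain ⟨v, hv⟩ := exists_aeval_ne_zero (K := K) PB.leadingCoeff
      (Polynomial.leadingCoeff_ne_zero.mpr hPB0)
    have hvv : ![v 0] = v := by funext i; fin_cases i; rfl
    obtain ⟨x1, hx1⟩ := exists_root_eval₂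
      ((aeval ![v 0] : MvPolynomial (Fin 1) k →ₐ[k] K) : MvPolynomial (Fin 1) k →+* K) PB hPBdeg
      (by show aeval ![v 0] PB.leadingCoeff ≠ 0; rw [hvv]; exact hv)
    have hpt : aeval ![x1, v 0] Fs = 0 := by
      rw [eval_finSuccEquiv_compat]; exact hx1
    have hswap : (![x1, v 0] ∘ (Equiv.swap (0 : Fin 2) 1)) = ![v 0, x1] := by
      funext i; fin_cases i <;> simp
    have hpt' : aeval ![v 0, x1] F = 0 := by
      rw [hFsdef, aeval_rename, hswap] at hpt
      exact hpt
    exact hsmooth (v 0) x1 hpt' ⟨by rw [hp0, map_zero], by rw [hp1, map_zero]⟩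
  -- Step B: choose lam with nonzero directional derivative polynomial
  obtain ⟨lam, hP⟩ : ∃ lam : k, pderiv 0 F + C lam * pderiv 1 F ≠ 0 := by
    by_cases h0 : pderiv 0 F = 0
    · refine ⟨1, ?_⟩
      rw [h0, zero_add, map_one, one_mul]
      exact fun h1 => hboth ⟨h0, h1⟩
    · exact ⟨0, by rwa [map_zero, zero_mul, add_zero]⟩
  -- the sheared coordinates
  set g : Fin 2 → MvPolynomial (Fin 2) k := ![X 0, C lam * X 0 + X 1] with hgdef
  set σ : MvPolynomial (Fin 2) k →ₐ[k] MvPolynomial (Fin 2) k := aeval g with hσdef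
  have hg0 : g 0 = X 0 := rfl
  have hg1 : g 1 = C lam * X 0 + X 1 := rfl
  have hσinj : Function.Injective σ := by
    have hleft : ∀ p, (aeval ![X 0, X 1 - C lam * X 0] : MvPolynomial (Fin 2) k →ₐ[k]
        MvPolynomial (Fin 2) k) (σ p) = p := by
      intro p
      have h := MvPolynomial.algHom_ext (f := (aeval ![X 0, X 1 - C lam * X 0]).comp σ)
        (g := AlgHom.id k (MvPolynomial (Fin 2) k)) ?_
      · exact AlgHom.congr_fun h p
      · intro i
        refine Fin.cases ?_ (fun j => ?_) i
        · simp [hσdef, hgdef]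
        · have hj : j = 0 := Subsingleton.elim j 0
          subst hj
          rw [AlgHom.comp_apply, AlgHom.id_apply]
          show (aeval ![X 0, X 1 - C lam * X 0]) (σ (X 1)) = X 1
          rw [hσdef, aeval_X, show g 1 = C lam * X 0 + X 1 from rfl]
          simp
    intro p q h
    rw [← hleft p, ← hleft q, h]
  -- chain rules
  have hchain0 : ∀ p, pderiv 0 (σ p) = σ (pderiv 0 p + C lam * pderiv 1 p) := by
    intro p
    rw [hσdef, pderiv_aeval_two g 0 p, hg0, hg1]
    have e1 : pderiv (0 : Fin 2) (X (0 : Fin 2) : MvPolynomial (Fin 2) k) = 1 := pderiv_X_self 0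
    have e2 : pderiv (0 : Fin 2) (C lam * X 0 + X 1 : MvPolynomial (Fin 2) k) = C lam := by
      rw [map_add, pderiv_C_mul, pderiv_X_self, pderiv_X_of_ne (by decide), mul_one, add_zero]
    rw [e1, e2, map_add, map_mul, aeval_C, algebraMap_eq]
    ring
  have hchain1 : ∀ p, pderiv 1 (σ p) = σ (pderiv 1 p) := by
    intro p
    rw [hσdef, pderiv_aeval_two g 1 p, hg0, hg1]
    have e1 : pderiv (1 : Fin 2) (X (0 : Fin 2) : MvPolynomial (Fin 2) k) = 0 :=
      pderiv_X_of_ne (by decide)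
    have e2 : pderiv (1 : Fin 2) (C lam * X 0 + X 1 : MvPolynomial (Fin 2) k) = 1 := by
      rw [map_add, pderiv_C_mul, pderiv_X_of_ne (by decide), pderiv_X_self, mul_zero, zero_add]
    rw [e1, e2]
    ring
  -- evaluation of sheared polynomials
  have hcomp : ∀ (x m : K) (p : MvPolynomial (Fin 2) k),
      aeval ![x, m] (σ p) = aeval ![x, algebraMap k K lam * x + m] p := by
    intro x m p
    have h := MvPolynomial.algHom_ext (f := (aeval ![x, m]).comp σ)
      (g := (aeval ![x, algebraMap k K lam * x + m] : MvPolynomial (Fin 2) k →ₐ[k] K)) ?_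
    · exact AlgHom.congr_fun h p
    · intro i
      refine Fin.cases ?_ (fun j => ?_) i
      · simp [hσdef, hgdef]
      · have hj : j = 0 := Subsingleton.elim j 0
        subst hj
        show (aeval ![x, m]) (σ (X 1)) = _
        rw [hσdef, aeval_X, show g 1 = C lam * X 0 + X 1 from rfl]
        simp [Algebra.smul_def]
  -- the sheared curve
  set HA : MvPolynomial (Fin 2) k := σ F with hHAdef
  set HB := finSuccEquiv k 1 HA with hHBdef
  have hDBe : Polynomial.derivative HB = finSuccEquiv k 1 (σ (pderiv 0 F + C lam * pderiv 1 F)) := by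
    rw [hHBdef, derivative_finSuccEquiv, hHAdef, hchain0]
  have hDB : Polynomial.derivative HB ≠ 0 := by
    rw [hDBe]
    intro h
    have h2 : σ (pderiv 0 F + C lam * pderiv 1 F) = 0 :=
      (finSuccEquiv k 1).injective (by rw [h, map_zero])
    exact hP (hσinj (by rw [h2, map_zero]))
  have hHB0 : HB ≠ 0 := by
    intro h
    apply hDB
    rw [h, Polynomial.derivative_zero]
  -- smoothness in the new coordinates
  have SA : ∀ x m : K, aeval ![x, m] HA = 0 →
      ¬ (aeval ![x, m] (pderiv 0 HA) = 0 ∧ aeval ![x, m] (pderiv 1 HA) = 0) := by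
    intro x m h0 hc
    obtain ⟨ha, hb⟩ := hc
    rw [hHAdef, hchain1, hcomp] at hb
    rw [hHAdef, hchain0, hcomp] at ha
    rw [hHAdef, hcomp] at h0
    refine hsmooth x (algebraMap k K lam * x + m) h0 ⟨?_, hb⟩
    rw [map_add, map_mul, aeval_C, hb, mul_zero, add_zero] at ha
    exact ha
  -- no square factors of positive t-degree
  have nosq : ∀ q : Polynomial (MvPolynomial (Fin 1) k), Irreducible q → 1 ≤ q.natDegree →
      ¬ (q * q ∣ HB) := by
    intro q hq hdeg hsq
    have hsqA : (finSuccEquiv k 1).symm q * (finSuccEquiv k 1).symm q ∣ HA := by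
      obtain ⟨w, hw⟩ := hsq
      refine ⟨(finSuccEquiv k 1).symm w, ?_⟩
      apply (finSuccEquiv k 1).injective
      simp only [map_mul, AlgEquiv.apply_symm_apply]
      rw [← hHBdef]
      exact hw
    have hq0 : q ≠ 0 := hq.ne_zero
    obtain ⟨v, hv⟩ := exists_aeval_ne_zero (K := K) q.leadingCoeff
      (Polynomial.leadingCoeff_ne_zero.mpr hq0)
    have hvv : ![v 0] = v := by funext i; fin_cases i; rfl
    obtain ⟨x, hx⟩ := exists_root_eval₂
      ((aeval ![v 0] : MvPolynomial (Fin 1) k →ₐ[k] K) : MvPolynomial (Fin 1) k →+* K) q hdeg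
      (by show aeval ![v 0] q.leadingCoeff ≠ 0; rw [hvv]; exact hv)
    have hxq : aeval ![x, v 0] ((finSuccEquiv k 1).symm q) = 0 := by
      rw [eval_finSuccEquiv_compat]
      simp only [AlgEquiv.apply_symm_apply]
      exact hx
    have hdvd0 : aeval ![x, v 0] HA = 0 := by
      obtain ⟨w, hw⟩ := (dvd_mul_right ((finSuccEquiv k 1).symm q)
        ((finSuccEquiv k 1).symm q)).trans hsqA
      rw [hw, map_mul, hxq, zero_mul]
    refine SA x (v 0) hdvd0 ⟨?_, ?_⟩
    · obtain ⟨w, hw⟩ := dvd_pderiv_of_sq_dvd (i := 0) hsqA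
      rw [hw, map_mul, hxq, zero_mul]
    · obtain ⟨w, hw⟩ := dvd_pderiv_of_sq_dvd (i := 1) hsqA
      rw [hw, map_mul, hxq, zero_mul]
  -- extraction of a good irreducible factor
  obtain ⟨q, hq, hqdvd, hqdeg, hqnd⟩ : ∃ q : Polynomial (MvPolynomial (Fin 1) k),
      Irreducible q ∧ q ∣ HB ∧ 1 ≤ q.natDegree ∧ ¬ q ∣ Polynomial.derivative HB := by
    by_contra hcon
    push_neg at hcon
    exact hDB (lemB HB hHB0 (fun q hq hdvd hdeg =>
      ⟨hcon q hq hdvd hdeg, nosq q hq hdeg⟩))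
  -- Gauss's lemma and Bezout over the fraction field
  letI : NormalizationMonoid (MvPolynomial (Fin 1) k) :=
    UniqueFactorizationMonoid.normalizationMonoid.toNormalizationMonoid
  letI : NormalizedGCDMonoid (MvPolynomial (Fin 1) k) :=
    UniqueFactorizationMonoid.toNormalizedGCDMonoid _
  set R := MvPolynomial (Fin 1) k with hRdef
  set Fr := FractionRing R with hFrdef
  set φ := algebraMap R Fr with hφdef
  have hq0 : q ≠ 0 := hq.ne_zero
  have hprim : q.IsPrimitive := by
    intro r hr
    obtain ⟨s, hs⟩ := hr
    rcases hq.isUnit_or_isUnit hs with h | h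
    · exact Polynomial.isUnit_C.mp h
    · exfalso
      obtain ⟨u, -, hu⟩ := Polynomial.isUnit_iff.mp h
      have hq2 : q = Polynomial.C (r * u) := by rw [hs, ← hu, ← Polynomial.C_mul]
      rw [hq2, Polynomial.natDegree_C] at hqdeg
      omega
  have hqF_irr : Irreducible (q.map φ) :=
    (hprim.irreducible_iff_irreducible_map_fraction_map (K := Fr)).mp hq
  have hqF_ndvd : ¬ q.map φ ∣ (Polynomial.derivative HB).map φ := by
    intro hdvdF
    apply hqnd
    have hcont : (Polynomial.derivative HB).content ≠ 0 := by
      rwa [Ne, Polynomial.content_eq_zero_iff]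
    have hCunit : IsUnit (Polynomial.C (φ (Polynomial.derivative HB).content)) := by
      rw [Polynomial.isUnit_C]
      exact (isUnit_iff_ne_zero).mpr (fun h =>
        hcont ((IsFractionRing.injective R Fr) (by rw [h, map_zero])))
    have hsplit : (Polynomial.derivative HB).map φ
        = Polynomial.C (φ (Polynomial.derivative HB).content)
          * (Polynomial.derivative HB).primPart.map φ := by
      conv_lhs => rw [(Polynomial.derivative HB).eq_C_content_mul_primPart]
      rw [Polynomial.map_mul, Polynomial.map_C]
    rw [hsplit, IsUnit.dvd_mul_left hCunit] at hdvdF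
    have := hprim.dvd_of_fraction_map_dvd_fraction_map (K := Fr)
      hdvdF
    exact this.trans (Polynomial.primPart_dvd _)
  obtain ⟨a, b, hab⟩ := (hqF_irr.coprime_iff_not_dvd).mpr hqF_ndvd
  obtain ⟨c, hc⟩ := IsLocalization.integerNormalization_map_to_map
    (nonZeroDivisors R) a
  obtain ⟨d, hd⟩ := IsLocalization.integerNormalization_map_to_map
    (nonZeroDivisors R) b
  set E := (c : R) * (d : R) with hEdef
  have hE : E ≠ 0 := mul_ne_zero (nonZeroDivisors.ne_zero c.2) (nonZeroDivisors.ne_zero d.2)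
  have hZ : IsLocalization.integerNormalization (nonZeroDivisors R) a * Polynomial.C (d : R) * q
      + IsLocalization.integerNormalization (nonZeroDivisors R) b * Polynomial.C (c : R)
        * Polynomial.derivative HB = Polynomial.C E := by
    apply Polynomial.map_injective φ (IsFractionRing.injective R Fr)
    rw [Polynomial.map_add, Polynomial.map_mul, Polynomial.map_mul, Polynomial.map_mul,
      Polynomial.map_mul, Polynomial.map_C, Polynomial.map_C, Polynomial.map_C, hc, hd,
      Algebra.smul_def, Algebra.smul_def]
    have halg : ∀ r : R, algebraMap R (Polynomial Fr) r = Polynomial.C (φ r) := fun r => rfl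
    rw [halg, halg, hEdef, map_mul, Polynomial.C_mul]
    linear_combination (Polynomial.C (φ (c : R)) * Polynomial.C (φ (d : R))) * hab
  -- choose mu in k
  have hlead : q.leadingCoeff ≠ 0 := Polynomial.leadingCoeff_ne_zero.mpr hq0
  obtain ⟨v, hv⟩ := exists_eval_ne_zero (E * q.leadingCoeff) (mul_ne_zero hE hlead)
  set mu := v 0 with hmudef
  have hvv : ![mu] = v := by funext i; fin_cases i; rfl
  rw [← hvv, map_mul] at hv
  have hE0 : eval ![mu] E ≠ 0 := fun h => hv (by rw [h, zero_mul])
  have hlead0 : eval ![mu] q.leadingCoeff ≠ 0 := fun h => hv (by rw [h, mul_zero])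
  set mK := algebraMap k K mu with hmKdef
  have hcompat : ∀ cc : R, aeval ![mK] cc = algebraMap k K (eval ![mu] cc) := by
    intro cc
    have h := MvPolynomial.ringHom_ext (σ := Fin 1)
      (f := ((aeval ![mK] : R →ₐ[k] K) : R →+* K))
      (g := (algebraMap k K).comp (eval ![mu] : R →+* k)) ?_ ?_
    · exact RingHom.congr_fun h cc
    · intro aa; simp
    · intro i
      have : i = 0 := Subsingleton.elim i 0
      subst this
      simp [hmKdef]
  have hleadK : aeval ![mK] q.leadingCoeff ≠ 0 := by
    rw [hcompat]
    exact fun h => hlead0 ((algebraMap k K).injective (by rw [h, map_zero]))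
  obtain ⟨x, hx⟩ := exists_root_eval₂ ((aeval ![mK] : R →ₐ[k] K) : R →+* K) q hqdeg hleadK
  have hρZ := congrArg (Polynomial.eval₂RingHom ((aeval ![mK] : R →ₐ[k] K) : R →+* K) x) hZ
  simp only [map_add, map_mul, Polynomial.coe_eval₂RingHom, Polynomial.eval₂_C] at hρZ
  rw [hx, mul_zero, zero_add] at hρZ
  have hψE : (aeval ![mK] : R →ₐ[k] K) E ≠ 0 := by
    rw [hcompat]
    exact fun h => hE0 ((algebraMap k K).injective (by rw [h, map_zero]))
  have hDx : Polynomial.eval₂ ((aeval ![mK] : R →ₐ[k] K) : R →+* K) x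
      (Polynomial.derivative HB) ≠ 0 := by
    intro h
    rw [h, mul_zero] at hρZ
    exact hψE hρZ.symm
  have hHx : Polynomial.eval₂ ((aeval ![mK] : R →ₐ[k] K) : R →+* K) x HB = 0 := by
    obtain ⟨w, hw⟩ := hqdvd
    rw [hw, Polynomial.eval₂_mul, hx, zero_mul]
  have hH0 : aeval ![x, mK] HA = 0 := by
    rw [eval_finSuccEquiv_compat, ← hHBdef]
    exact hHx
  have hTx : aeval ![x, mK] (pderiv 0 HA) ≠ 0 := by
    rw [eval_finSuccEquiv_compat, ← derivative_finSuccEquiv, ← hHBdef]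
    exact hDx
  -- separability of x
  have hxsep : IsSeparable k x := by
    set g0 : Polynomial k := HB.map (eval ![mu] : R →+* k) with hg0def
    have hmapcomm : g0.map (algebraMap k K)
        = HB.map ((aeval ![mK] : R →ₐ[k] K) : R →+* K) := by
      rw [hg0def, Polynomial.map_map]
      congr 1
      exact RingHom.ext fun cc => (hcompat cc).symm
    apply sep_of_simple_root g0 x
    · rw [Polynomial.aeval_def, ← Polynomial.eval_map, hmapcomm, Polynomial.eval_map]
      exact hHx
    · rw [Polynomial.aeval_def, ← Polynomial.eval_map, ← Polynomial.derivative_map, hmapcomm,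
        Polynomial.derivative_map, Polynomial.eval_map]
      exact hDx
  have hysep : IsSeparable k (algebraMap k K lam * x + mK) := by
    have hx' : x ∈ separableClosure k K := mem_separableClosure_iff.mpr hxsep
    have : algebraMap k K lam * x + mK ∈ separableClosure k K := by
      refine add_mem (mul_mem ?_ hx') ?_
      · exact (separableClosure k K).algebraMap_mem lam
      · rw [hmKdef]; exact (separableClosure k K).algebraMap_mem mu
    exact mem_separableClosure_iff.mp this
  refine ⟨lam, mu, x, algebraMap k K lam * x + mK, rfl, ?_, ?_, hxsep, hysep⟩
  · rw [← hcomp]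
    exact hH0
  · intro h
    apply hTx
    rw [hHAdef, hchain0, hcomp]
    exact h
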